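/- arXiv:1401.7956 — 3 statements merged into one kernel-verified Lean document; each statement's English description precedes it below -/
import Mathlib

section
/- Let n ≥ 1, let ν : ℝⁿ → [0,∞] be a Borel function that is locally integrable with respect to Lebesgue measure, and let u : ℝⁿ → ℝ satisfy |u(b) − u(a)| ≤ |b − a| ∫_0^1 ν(a + t(b − a)) dt for all a, b ∈ ℝⁿ. Then for every k ∈ ℕ the restriction of u to the set {x ∈ ℝⁿ : Mν(x) ≤ k} is Lipschitz (with constant at most 2Ck for a constant C depending only on n), and u is Lebesgue measurable. -/
open MeasureTheory Metric Set ENNReal Filter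

/-- The (centered) Hardy–Littlewood maximal function of `f : ℝⁿ → [0,∞]`:
`Mf(x) = sup_{ρ>0} λⁿ(B(x,ρ))⁻¹ ∫_{B(x,ρ)} f dλⁿ`. -/
noncomputable def maximalFn {n : ℕ} (f : EuclideanSpace ℝ (Fin n) → ℝ≥0∞)
    (x : EuclideanSpace ℝ (Fin n)) : ℝ≥0∞ :=
  ⨆ (ρ : ℝ) (_ : 0 < ρ), (volume (Metric.ball x ρ))⁻¹ * ∫⁻ y in Metric.ball x ρ, f y

section aux

variable {n : ℕ}

local notation "E" => EuclideanSpace ℝ (Fin n)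

lemma aux_le_max (ν : E → ℝ≥0∞) (x : E) {ρ : ℝ} (hρ : 0 < ρ) :
    ∫⁻ y in ball x ρ, ν y ≤ maximalFn ν x * volume (ball x ρ) := by
  have h1 : (volume (ball x ρ))⁻¹ * ∫⁻ y in ball x ρ, ν y ≤ maximalFn ν x :=
    le_iSup₂ (f := fun (ρ : ℝ) (_ : 0 < ρ) =>
      (volume (ball x ρ))⁻¹ * ∫⁻ y in ball x ρ, ν y) ρ hρ
  have h0 : volume (ball x ρ) ≠ 0 := (measure_ball_pos volume x hρ).ne'
  have ht : volume (ball x ρ) ≠ ∞ := measure_ball_lt_top.ne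
  calc ∫⁻ y in ball x ρ, ν y
      = (volume (ball x ρ) * (volume (ball x ρ))⁻¹) * ∫⁻ y in ball x ρ, ν y := by
        rw [ENNReal.mul_inv_cancel h0 ht, one_mul]
    _ = volume (ball x ρ) * ((volume (ball x ρ))⁻¹ * ∫⁻ y in ball x ρ, ν y) := by
        rw [mul_assoc]
    _ ≤ volume (ball x ρ) * maximalFn ν x := mul_le_mul_right h1 _
    _ = maximalFn ν x * volume (ball x ρ) := mul_comm _ _

lemma maximalFn_le_of_rat (hn : 1 ≤ n) (ν : E → ℝ≥0∞) (x : E) (c : ℝ≥0∞)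
    (h : ∀ q : ℚ, 0 < q → ∫⁻ y in ball x (q : ℝ), ν y ≤ c * volume (ball x (q : ℝ))) :
    maximalFn ν x ≤ c := by
  haveI : Nonempty (Fin n) := Fin.pos_iff_nonempty.mp hn
  refine iSup₂_le fun ρ hρ => ?_
  have h0 : volume (ball x ρ) ≠ 0 := (measure_ball_pos volume x hρ).ne'
  have htop : volume (ball x ρ) ≠ ∞ := measure_ball_lt_top.ne
  suffices h2 : ∫⁻ y in ball x ρ, ν y ≤ c * volume (ball x ρ) by
    calc (volume (ball x ρ))⁻¹ * ∫⁻ y in ball x ρ, ν y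
        ≤ (volume (ball x ρ))⁻¹ * (c * volume (ball x ρ)) := mul_le_mul_right h2 _
      _ = c * ((volume (ball x ρ))⁻¹ * volume (ball x ρ)) := by ring
      _ = c := by rw [ENNReal.inv_mul_cancel h0 htop, mul_one]
  rcases eq_or_ne c ∞ with hc | hc
  · rw [hc, ENNReal.top_mul h0]; exact le_top
  -- choose rationals q j decreasing to ρ
  have hex : ∀ j : ℕ, ∃ q : ℚ, ρ < q ∧ (q : ℝ) < ρ + 1 / (j + 1) :=
    fun j => exists_rat_btwn (by
      have h1 : (0:ℝ) < 1 / ((j : ℝ) + 1) := by positivity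
      linarith)
  choose q hq1 hq2 using hex
  have hqpos : ∀ j, 0 < q j := fun j => by
    have := hq1 j; exact_mod_cast lt_of_le_of_lt hρ.le this
  have key : ∀ j, ∫⁻ y in ball x ρ, ν y ≤ c * volume (ball x ((q j : ℝ))) := fun j =>
    le_trans (lintegral_mono_set (ball_subset_ball (hq1 j).le)) (h (q j) (hqpos j))
  have hB : volume (ball (0 : E) 1) ≠ ∞ := measure_ball_lt_top.ne
  have hvol : ∀ j, volume (ball x ((q j : ℝ)))
      = ENNReal.ofReal ((q j : ℝ) ^ n) * volume (ball (0 : E) 1) := fun j => by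
    rw [Measure.addHaar_ball volume x (by exact_mod_cast (hqpos j).le)]
    simp [finrank_euclideanSpace_fin]
  have hvolρ : volume (ball x ρ) = ENNReal.ofReal (ρ ^ n) * volume (ball (0 : E) 1) := by
    rw [Measure.addHaar_ball volume x hρ.le]
    simp [finrank_euclideanSpace_fin]
  have hqlim : Tendsto (fun j : ℕ => (q j : ℝ)) atTop (nhds ρ) := by
    apply tendsto_of_tendsto_of_tendsto_of_le_of_le (g := fun _ : ℕ => ρ)
      (h := fun j : ℕ => ρ + 1 / (j + 1)) tendsto_const_nhds
    · have : Tendsto (fun j : ℕ => 1 / ((j : ℝ) + 1)) atTop (nhds 0) :=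
        tendsto_one_div_add_atTop_nhds_zero_nat
      simpa using tendsto_const_nhds.add this
    · exact fun j => (hq1 j).le
    · exact fun j => (hq2 j).le
  have tend : Tendsto (fun j => c * volume (ball x ((q j : ℝ)))) atTop
      (nhds (c * volume (ball x ρ))) := by
    simp only [hvol, hvolρ]
    apply ENNReal.Tendsto.const_mul _ (Or.inr hc)
    apply ENNReal.Tendsto.mul_const _ (Or.inr hB)
    exact (ENNReal.continuous_ofReal.tendsto _).comp (hqlim.pow n)
  exact ge_of_tendsto' tend key

lemma ae_max_lt_top (hn : 1 ≤ n) (ν : E → ℝ≥0∞) (hν : Measurable ν)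
    (hint : (∫⁻ y, ν y) < ∞) : ∀ᵐ x : E, maximalFn ν x < ∞ := by
  haveI : Nonempty (Fin n) := Fin.pos_iff_nonempty.mp hn
  set ρm : Measure E := volume.withDensity ν with hρm
  haveI : IsFiniteMeasure ρm := isFiniteMeasure_withDensity hint.ne
  filter_upwards [Besicovitch.ae_tendsto_rnDeriv ρm volume,
    Measure.rnDeriv_lt_top ρm volume] with x hx hd
  set d := ρm.rnDeriv volume x with hdd
  -- eventually the ratio is at most d + 1
  have hev : ∀ᶠ r in nhdsWithin 0 (Ioi 0),
      ρm (closedBall x r) / volume (closedBall x r) < d + 1 :=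
    hx.eventually_lt_const (ENNReal.lt_add_right hd.ne one_ne_zero)
  obtain ⟨ε', hε', hsub⟩ := mem_nhdsGT_iff_exists_Ioo_subset.mp hev
  have hε'0 : 0 < ε' := hε'
  -- bound the maximal function
  have hbound : maximalFn ν x ≤ max (d + 1)
      ((volume (ball x (ε' / 2)))⁻¹ * ∫⁻ y, ν y) := by
    refine iSup₂_le fun ρ hρ => ?_
    rcases lt_or_ge ρ ε' with hcase | hcase
    · -- small radius
      refine le_trans ?_ (le_max_left _ _)
      have hratio := hsub (show ρ ∈ Ioo 0 ε' from ⟨hρ, hcase⟩)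
      have hcb0 : volume (closedBall x ρ) ≠ 0 :=
        ((measure_ball_pos volume x hρ).trans_le
          (measure_mono ball_subset_closedBall)).ne'
      have hcbt : volume (closedBall x ρ) ≠ ∞ := measure_closedBall_lt_top.ne
      have h1 : ρm (closedBall x ρ) ≤ (d + 1) * volume (closedBall x ρ) := by
        simp only [mem_setOf_eq] at hratio
        rw [ENNReal.div_lt_iff (Or.inl hcb0) (Or.inl hcbt)] at hratio
        exact hratio.le
      have h2 : ∫⁻ y in ball x ρ, ν y ≤ (d + 1) * volume (ball x ρ) := by
        have hball : ρm (ball x ρ) = ∫⁻ y in ball x ρ, ν y :=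
          withDensity_apply ν measurableSet_ball
        have hcbeq : volume (closedBall x ρ) = volume (ball x ρ) :=
          Measure.addHaar_closedBall_eq_addHaar_ball volume x ρ
        calc ∫⁻ y in ball x ρ, ν y = ρm (ball x ρ) := hball.symm
          _ ≤ ρm (closedBall x ρ) := measure_mono ball_subset_closedBall
          _ ≤ (d + 1) * volume (closedBall x ρ) := h1
          _ = (d + 1) * volume (ball x ρ) := by rw [hcbeq]
      have h0 : volume (ball x ρ) ≠ 0 := (measure_ball_pos volume x hρ).ne'
      have htop : volume (ball x ρ) ≠ ∞ := measure_ball_lt_top.ne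
      calc (volume (ball x ρ))⁻¹ * ∫⁻ y in ball x ρ, ν y
          ≤ (volume (ball x ρ))⁻¹ * ((d + 1) * volume (ball x ρ)) :=
            mul_le_mul_right h2 _
        _ = (d + 1) * ((volume (ball x ρ))⁻¹ * volume (ball x ρ)) := by ring
        _ = d + 1 := by rw [ENNReal.inv_mul_cancel h0 htop, mul_one]
    · -- large radius
      refine le_trans ?_ (le_max_right _ _)
      have hmono : (volume (ball x ρ))⁻¹ ≤ (volume (ball x (ε' / 2)))⁻¹ :=
        ENNReal.inv_le_inv' (measure_mono (ball_subset_ball (by linarith)))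
      exact mul_le_mul' hmono (setLIntegral_le_lintegral _ _)
  refine lt_of_le_of_lt hbound ?_
  apply max_lt
  · exact ENNReal.add_lt_top.mpr ⟨hd, ENNReal.one_lt_top⟩
  · apply ENNReal.mul_lt_top _ hint
    · exact ENNReal.inv_lt_top.mpr (measure_ball_pos volume x (by linarith))
lemma keyA_t (hn : 1 ≤ n) (ν : E → ℝ≥0∞) (hν : Measurable ν) (x : E) {r : ℝ} (hr : 0 < r)
    {t : ℝ} (ht : 0 < t) :
    ∫⁻ z in ball x r, ENNReal.ofReal (dist x z) * ν (x + t • (z - x)) ≤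
      ENNReal.ofReal r * maximalFn ν x * volume (ball x r) := by
  haveI : Nonempty (Fin n) := Fin.pos_iff_nonempty.mp hn
  set h : E → ℝ≥0∞ :=
    (ball x (t * r)).indicator (fun w => ENNReal.ofReal (dist x w / t) * ν w) with hh
  have hmeas_h : Measurable h := by
    apply Measurable.indicator _ measurableSet_ball
    exact ((ENNReal.measurable_ofReal.comp
      ((measurable_const.dist measurable_id).div_const t)).mul hν)
  have step1 : ∫⁻ z in ball x r, ENNReal.ofReal (dist x z) * ν (x + t • (z - x)) =
      ∫⁻ z, h (x + t • (z - x)) := by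
    rw [← lintegral_indicator measurableSet_ball]
    congr 1
    funext z
    have hdist : dist x (x + t • (z - x)) = t * dist x z := by
      rw [dist_self_add_right, norm_smul, Real.norm_eq_abs, abs_of_pos ht,
        ← dist_eq_norm, dist_comm]
    by_cases hz : z ∈ ball x r
    · have hmem : x + t • (z - x) ∈ ball x (t * r) := by
        rw [mem_ball, dist_comm, hdist]
        exact (mul_lt_mul_iff_right₀ ht).mpr (mem_ball'.mp hz)
      rw [indicator_of_mem hz, hh, indicator_of_mem hmem]
      congr 2
      rw [hdist]
      field_simp
    · have hmem : x + t • (z - x) ∉ ball x (t * r) := by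
        rw [mem_ball, dist_comm, hdist]
        intro hcon
        exact hz (mem_ball'.mpr ((mul_lt_mul_iff_right₀ ht).mp hcon))
      rw [indicator_of_notMem hz, hh, indicator_of_notMem hmem]
  set c : E := x - t • x with hc
  have habs : ∀ z : E, x + t • (z - x) = t • z + c := by
    intro z; rw [hc, smul_sub]; abel
  have step2 : (∫⁻ z, h (x + t • (z - x))) = ∫⁻ z, h (t • z + c) := by
    simp only [habs]
  set H : E → ℝ≥0∞ := fun w => h (w + c) with hH
  have hmeas_H : Measurable H := hmeas_h.comp (measurable_add_const c)
  have step3 : (∫⁻ z, h (t • z + c)) =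
      ENNReal.ofReal ((t ^ n)⁻¹) * ∫⁻ w, h w := by
    have e1 : (∫⁻ z, h (t • z + c)) = ∫⁻ z, H (t • z) := rfl
    have e2 : (∫⁻ z, H (t • z)) = ∫⁻ w, H w ∂(Measure.map (t • ·) volume) :=
      (lintegral_map hmeas_H (measurable_const_smul t)).symm
    have e3 : Measure.map (t • ·) (volume : Measure E) =
        ENNReal.ofReal ((t ^ n)⁻¹) • volume := by
      rw [Measure.map_addHaar_smul volume ht.ne']
      congr 1
      rw [finrank_euclideanSpace_fin, abs_of_pos (by positivity)]
    have e4 : (∫⁻ w, H w) = ∫⁻ w, h w := lintegral_add_right_eq_self h c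
    rw [e1, e2, e3, lintegral_smul_measure, e4, smul_eq_mul]
  have step5 : (∫⁻ w, h w) ≤ ENNReal.ofReal r * (maximalFn ν x * volume (ball x (t * r))) := by
    rw [hh, lintegral_indicator measurableSet_ball]
    have hb : ∀ w ∈ ball x (t * r),
        ENNReal.ofReal (dist x w / t) * ν w ≤ ENNReal.ofReal r * ν w := by
      intro w hw
      apply mul_le_mul_left
      apply ENNReal.ofReal_le_ofReal
      rw [div_le_iff₀ ht, mul_comm]
      exact le_of_lt (by rw [dist_comm]; exact mem_ball.mp hw)
    calc ∫⁻ w in ball x (t * r), ENNReal.ofReal (dist x w / t) * ν w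
        ≤ ∫⁻ w in ball x (t * r), ENNReal.ofReal r * ν w :=
          setLIntegral_mono (measurable_const.mul hν) hb
      _ = ENNReal.ofReal r * ∫⁻ w in ball x (t * r), ν w :=
          lintegral_const_mul' _ _ ENNReal.ofReal_ne_top
      _ ≤ ENNReal.ofReal r * (maximalFn ν x * volume (ball x (t * r))) :=
          mul_le_mul_right (aux_le_max ν x (by positivity)) _
  have hvol : volume (ball x (t * r)) = ENNReal.ofReal (t ^ n) * volume (ball x r) := by
    rw [Measure.addHaar_ball volume x (by positivity : (0:ℝ) ≤ t * r),
      Measure.addHaar_ball volume x hr.le, finrank_euclideanSpace_fin, mul_pow,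
      ENNReal.ofReal_mul (by positivity), mul_assoc]
  have hcancel : ENNReal.ofReal ((t ^ n)⁻¹) * ENNReal.ofReal (t ^ n) = 1 := by
    rw [← ENNReal.ofReal_mul (by positivity), inv_mul_cancel₀ (by positivity), ENNReal.ofReal_one]
  calc ∫⁻ z in ball x r, ENNReal.ofReal (dist x z) * ν (x + t • (z - x))
      = ENNReal.ofReal ((t ^ n)⁻¹) * ∫⁻ w, h w := by rw [step1, step2, step3]
    _ ≤ ENNReal.ofReal ((t ^ n)⁻¹) *
        (ENNReal.ofReal r * (maximalFn ν x * volume (ball x (t * r)))) :=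
          mul_le_mul_right step5 _
    _ = (ENNReal.ofReal ((t ^ n)⁻¹) * ENNReal.ofReal (t ^ n)) *
        (ENNReal.ofReal r * maximalFn ν x * volume (ball x r)) := by
          rw [hvol]; ring
    _ = ENNReal.ofReal r * maximalFn ν x * volume (ball x r) := by rw [hcancel, one_mul]

lemma keyA (hn : 1 ≤ n) (ν : E → ℝ≥0∞) (hν : Measurable ν) (x : E) {r : ℝ} (hr : 0 < r) :
    ∫⁻ z in ball x r,
        ENNReal.ofReal (dist x z) * ∫⁻ t in Icc (0 : ℝ) 1, ν (x + t • (z - x)) ≤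
      ENNReal.ofReal r * maximalFn ν x * volume (ball x r) := by
  have hg : Measurable (fun p : E × ℝ => ν (x + p.2 • (p.1 - x))) := by
    apply hν.comp
    have : Continuous (fun p : E × ℝ => x + p.2 • (p.1 - x)) := by
      apply continuous_const.add
      exact continuous_snd.smul (continuous_fst.sub continuous_const)
    exact this.measurable
  have hF : Measurable (Function.uncurry fun (z : E) (t : ℝ) =>
      ENNReal.ofReal (dist x z) * ν (x + t • (z - x))) := by
    apply Measurable.mul
    · exact ENNReal.measurable_ofReal.comp ((measurable_const.dist measurable_id).comp measurable_fst)
    · exact hg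
  have swap := lintegral_lintegral_swap (μ := volume.restrict (ball x r))
    (ν := volume.restrict (Icc (0:ℝ) 1))
    (f := fun (z : E) (t : ℝ) => ENNReal.ofReal (dist x z) * ν (x + t • (z - x)))
    hF.aemeasurable
  calc ∫⁻ z in ball x r,
        ENNReal.ofReal (dist x z) * ∫⁻ t in Icc (0 : ℝ) 1, ν (x + t • (z - x))
      = ∫⁻ z in ball x r, ∫⁻ t in Icc (0 : ℝ) 1,
          ENNReal.ofReal (dist x z) * ν (x + t • (z - x)) := by
        congr 1; funext z
        exact (lintegral_const_mul' _ _ ENNReal.ofReal_ne_top).symm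
    _ = ∫⁻ t in Icc (0 : ℝ) 1, ∫⁻ z in ball x r,
          ENNReal.ofReal (dist x z) * ν (x + t • (z - x)) := swap
    _ = ∫⁻ t in Ioc (0 : ℝ) 1, ∫⁻ z in ball x r,
          ENNReal.ofReal (dist x z) * ν (x + t • (z - x)) := by
        rw [Measure.restrict_congr_set Ioc_ae_eq_Icc]
    _ ≤ ∫⁻ _t in Ioc (0 : ℝ) 1,
          (ENNReal.ofReal r * maximalFn ν x * volume (ball x r)) := by
        apply setLIntegral_mono' measurableSet_Ioc
        intro t htmem
        exact keyA_t hn ν hν x hr htmem.1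
    _ = ENNReal.ofReal r * maximalFn ν x * volume (ball x r) := by
        rw [setLIntegral_const, Real.volume_Ioc]
        norm_num

lemma keyB (hn : 1 ≤ n) (ν : E → ℝ≥0∞) (hν : Measurable ν) (u : E → ℝ) (x y : E)
    (c : ℝ≥0∞) (hx : maximalFn ν x ≤ c) (hy : maximalFn ν y ≤ c)
    (hux : ∀ b ∈ ball x (dist x y), ENNReal.ofReal |u b - u x| ≤
      ENNReal.ofReal (dist x b) * ∫⁻ t in Icc (0 : ℝ) 1, ν (x + t • (b - x)))
    (huy : ∀ b ∈ ball x (dist x y), ENNReal.ofReal |u b - u y| ≤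
      ENNReal.ofReal (dist y b) * ∫⁻ t in Icc (0 : ℝ) 1, ν (y + t • (b - y))) :
    ENNReal.ofReal |u x - u y| ≤ (2 ^ (n + 1) + 1) * c * ENNReal.ofReal (dist x y) := by
  haveI : Nonempty (Fin n) := Fin.pos_iff_nonempty.mp hn
  rcases eq_or_ne x y with rfl | hxy
  · simp
  have hr : 0 < dist x y := dist_pos.mpr hxy
  set r := dist x y with hrdef
  rcases eq_or_ne c ∞ with rfl | hc
  · refine le_trans le_top (le_of_eq ?_)
    rw [ENNReal.mul_top (by simp : (2 ^ (n + 1) + 1 : ℝ≥0∞) ≠ 0),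
      ENNReal.top_mul (ENNReal.ofReal_pos.mpr hr).ne']
  -- main case
  set G1 : E → ℝ≥0∞ := fun z =>
    ENNReal.ofReal (dist x z) * ∫⁻ t in Icc (0 : ℝ) 1, ν (x + t • (z - x)) with hG1
  set G2 : E → ℝ≥0∞ := fun z =>
    ENNReal.ofReal (dist y z) * ∫⁻ t in Icc (0 : ℝ) 1, ν (y + t • (z - y)) with hG2
  have hinner : ∀ a : E, Measurable (fun z : E =>
      ∫⁻ t in Icc (0 : ℝ) 1, ν (a + t • (z - a))) := by
    intro a
    apply Measurable.lintegral_prod_right' (f := fun p : E × ℝ => ν (a + p.2 • (p.1 - a)))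
    apply hν.comp
    exact (continuous_const.add (continuous_snd.smul
      (continuous_fst.sub continuous_const))).measurable
  have hmG1 : Measurable G1 :=
    (ENNReal.measurable_ofReal.comp (measurable_const.dist measurable_id)).mul (hinner x)
  have hmG2 : Measurable G2 :=
    (ENNReal.measurable_ofReal.comp (measurable_const.dist measurable_id)).mul (hinner y)
  set V := volume (ball x r) with hV
  have hV0 : V ≠ 0 := (measure_ball_pos volume x hr).ne'
  have hVt : V ≠ ∞ := measure_ball_lt_top.ne
  have hpoint : ∀ z ∈ ball x r, ENNReal.ofReal |u x - u y| ≤ G1 z + G2 z := by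
    intro z hz
    have habs : |u x - u y| ≤ |u z - u x| + |u z - u y| := by
      have : u x - u y = (u z - u y) - (u z - u x) := by ring
      rw [this]
      calc |(u z - u y) - (u z - u x)| ≤ |u z - u y| + |u z - u x| := abs_sub _ _
        _ = |u z - u x| + |u z - u y| := add_comm _ _
    calc ENNReal.ofReal |u x - u y| ≤ ENNReal.ofReal (|u z - u x| + |u z - u y|) :=
          ENNReal.ofReal_le_ofReal habs
      _ ≤ ENNReal.ofReal |u z - u x| + ENNReal.ofReal |u z - u y| :=
          ENNReal.ofReal_add_le
      _ ≤ G1 z + G2 z := add_le_add (hux z hz) (huy z hz)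
  have hsub : ball x r ⊆ ball y (2 * r) := by
    intro z hz
    rw [mem_ball] at hz ⊢
    calc dist z y ≤ dist z x + dist x y := dist_triangle _ _ _
      _ < r + r := by rw [hrdef]; exact add_lt_add_left hz _
      _ = 2 * r := by ring
  have hvol2 : volume (ball y (2 * r)) = ENNReal.ofReal (2 ^ n) * V := by
    rw [hV, Measure.addHaar_ball volume y (by positivity : (0:ℝ) ≤ 2 * r),
      Measure.addHaar_ball volume x hr.le, finrank_euclideanSpace_fin, mul_pow,
      ENNReal.ofReal_mul (by positivity), mul_assoc]
  have hG1int : (∫⁻ z in ball x r, G1 z) ≤ ENNReal.ofReal r * c * V := by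
    calc (∫⁻ z in ball x r, G1 z) ≤ ENNReal.ofReal r * maximalFn ν x * V :=
          keyA hn ν hν x hr
      _ ≤ ENNReal.ofReal r * c * V := by
          exact mul_le_mul_left (mul_le_mul_right hx _) _
  have hG2int : (∫⁻ z in ball x r, G2 z) ≤
      ENNReal.ofReal 2 * ENNReal.ofReal r * c * (ENNReal.ofReal (2 ^ n) * V) := by
    calc (∫⁻ z in ball x r, G2 z) ≤ ∫⁻ z in ball y (2 * r), G2 z :=
          lintegral_mono_set hsub
      _ ≤ ENNReal.ofReal (2 * r) * maximalFn ν y * volume (ball y (2 * r)) :=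
          keyA hn ν hν y (by positivity)
      _ ≤ ENNReal.ofReal (2 * r) * c * volume (ball y (2 * r)) :=
          mul_le_mul_left (mul_le_mul_right hy _) _
      _ = ENNReal.ofReal 2 * ENNReal.ofReal r * c * (ENNReal.ofReal (2 ^ n) * V) := by
          rw [hvol2, ENNReal.ofReal_mul (by norm_num : (0:ℝ) ≤ 2)]
  have main : ENNReal.ofReal |u x - u y| * V ≤
      ((2 ^ (n + 1) + 1) * c * ENNReal.ofReal r) * V := by
    have h2 : ENNReal.ofReal 2 = 2 := ENNReal.ofReal_ofNat 2
    have h2n : ENNReal.ofReal ((2 : ℝ) ^ n) = 2 ^ n := by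
      rw [ENNReal.ofReal_pow (by norm_num : (0:ℝ) ≤ 2), ENNReal.ofReal_ofNat]
    calc ENNReal.ofReal |u x - u y| * V
        = ∫⁻ _z in ball x r, ENNReal.ofReal |u x - u y| := (setLIntegral_const _ _).symm
      _ ≤ ∫⁻ z in ball x r, (G1 z + G2 z) :=
          setLIntegral_mono (hmG1.add hmG2) hpoint
      _ = (∫⁻ z in ball x r, G1 z) + ∫⁻ z in ball x r, G2 z :=
          lintegral_add_left hmG1 _
      _ ≤ ENNReal.ofReal r * c * V +
          ENNReal.ofReal 2 * ENNReal.ofReal r * c * (ENNReal.ofReal (2 ^ n) * V) :=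
          add_le_add hG1int hG2int
      _ = ((2 ^ (n + 1) + 1) * c * ENNReal.ofReal r) * V := by
          rw [h2, h2n]; ring
  exact (ENNReal.mul_le_mul_iff_left hV0 hVt).mp main

lemma toReal_est {k : ℕ} {a d : ℝ} (hd : 0 ≤ d)
    (h : ENNReal.ofReal a ≤ (2 ^ (n + 1) + 1) * (k : ℝ≥0∞) * ENNReal.ofReal d) :
    a ≤ ((2 : ℝ) ^ (n + 1) + 1) * k * d := by
  have h1 : ((2 : ℝ≥0∞) ^ (n + 1) + 1) = ENNReal.ofReal ((2 : ℝ) ^ (n + 1) + 1) := by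
    rw [ENNReal.ofReal_add (by positivity) (by norm_num),
      ENNReal.ofReal_pow (by norm_num : (0:ℝ) ≤ 2), ENNReal.ofReal_ofNat, ENNReal.ofReal_one]
  have h2 : (k : ℝ≥0∞) = ENNReal.ofReal (k : ℝ) := (ENNReal.ofReal_natCast k).symm
  rw [h1, h2, ← ENNReal.ofReal_mul (by positivity),
    ← ENNReal.ofReal_mul (by positivity)] at h
  exact (ENNReal.ofReal_le_ofReal_iff (by positivity)).mp h

lemma continuousOn_of_lip {L : ℝ} (hL : 0 ≤ L) (u : E → ℝ) (s : Set E)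
    (h : ∀ x ∈ s, ∀ y ∈ s, dist (u x) (u y) ≤ L * dist x y) : ContinuousOn u s := by
  intro x hx
  rw [Metric.continuousWithinAt_iff]
  intro ε hε
  have hL1 : 0 < L + 1 := by linarith
  refine ⟨ε / (L + 1), by positivity, fun {y} hy hdy => ?_⟩
  calc dist (u y) (u x) ≤ L * dist y x := h y hy x hx
    _ ≤ L * (ε / (L + 1)) := mul_le_mul_of_nonneg_left hdy.le hL
    _ < ε := by rw [mul_comm, div_mul_eq_mul_div, div_lt_iff₀ hL1]; nlinarith

end aux

/-- Let `n ≥ 1`, let `ν : ℝⁿ → [0,∞]` be Borel and locally integrable,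
and let `u : ℝⁿ → ℝ` satisfy `|u(b) − u(a)| ≤ |b − a| ∫_0^1 ν(a + t(b − a)) dt` for all
`a, b`. Then there is `C = C(n)` such that for every `k ∈ ℕ` the restriction of `u` to
`{Mν ≤ k}` is Lipschitz with constant at most `2Ck`, and `u` is Lebesgue measurable. -/
theorem upper_gradient_implies_measurable
    (n : ℕ) (hn : 1 ≤ n) :
    ∃ C : ℝ, 0 < C ∧
      ∀ (ν : EuclideanSpace ℝ (Fin n) → ℝ≥0∞), Measurable ν →
        (∀ K : Set (EuclideanSpace ℝ (Fin n)), IsCompact K → (∫⁻ x in K, ν x) < ∞) →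
      ∀ u : EuclideanSpace ℝ (Fin n) → ℝ,
        (∀ a b : EuclideanSpace ℝ (Fin n),
          ENNReal.ofReal |u b - u a| ≤
            ENNReal.ofReal (dist a b) * ∫⁻ t in Set.Icc (0 : ℝ) 1, ν (a + t • (b - a))) →
        (∀ k : ℕ, ∀ x ∈ {x | maximalFn ν x ≤ (k : ℝ≥0∞)},
            ∀ y ∈ {x | maximalFn ν x ≤ (k : ℝ≥0∞)},
              dist (u x) (u y) ≤ 2 * C * (k : ℝ) * dist x y) ∧
        AEMeasurable u volume := by
  haveI : Nonempty (Fin n) := Fin.pos_iff_nonempty.mp hn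
  refine ⟨2 ^ (n + 1), by positivity, ?_⟩
  intro ν hν hloc u hu
  constructor
  · -- Lipschitz on sublevel sets of the maximal function
    intro k x hx y hy
    have hB := keyB hn ν hν u x y (k : ℝ≥0∞) hx hy
      (fun b _ => hu x b) (fun b _ => hu y b)
    rw [Real.dist_eq]
    refine le_trans (toReal_est dist_nonneg hB) ?_
    have hk : (0:ℝ) ≤ k := Nat.cast_nonneg k
    have h1 : (1:ℝ) ≤ 2 ^ (n + 1) := one_le_pow₀ (by norm_num)
    nlinarith [mul_nonneg hk (dist_nonneg (x := x) (y := y))]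
  · -- measurability
    set g : ℕ → EuclideanSpace ℝ (Fin n) → ℝ≥0∞ :=
      fun m => (ball (0 : EuclideanSpace ℝ (Fin n)) (m : ℝ)).indicator ν with hg
    have hgm : ∀ m, Measurable (g m) := fun m => hν.indicator measurableSet_ball
    have hgint : ∀ m, (∫⁻ y, g m y) < ∞ := by
      intro m
      rw [hg]
      simp only
      rw [lintegral_indicator measurableSet_ball]
      exact lt_of_le_of_lt (lintegral_mono_set ball_subset_closedBall)
        (hloc _ (isCompact_closedBall _ _))
    set S : ℕ → ℕ → Set (EuclideanSpace ℝ (Fin n)) := fun m k =>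
      ball (0 : EuclideanSpace ℝ (Fin n)) ((m : ℝ) / 8) ∩
        {x | ∀ q : ℚ, 0 < q →
          ∫⁻ y in ball x (q : ℝ), g m y ≤ (k : ℝ≥0∞) * volume (ball x (q : ℝ))} with hS
    have hSmeas : ∀ m k, MeasurableSet (S m k) := by
      intro m k
      apply measurableSet_ball.inter
      have : {x : EuclideanSpace ℝ (Fin n) | ∀ q : ℚ, 0 < q →
          ∫⁻ y in ball x (q : ℝ), g m y ≤ (k : ℝ≥0∞) * volume (ball x (q : ℝ))} =
          ⋂ (q : ℚ) (_ : 0 < q), {x | ∫⁻ y in ball x (q : ℝ), g m y ≤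
            (k : ℝ≥0∞) * volume (ball x (q : ℝ))} := by
        ext x; simp [mem_iInter]
      rw [this]
      refine MeasurableSet.iInter fun q => MeasurableSet.iInter fun hq => ?_
      have hmeas : Measurable fun x : EuclideanSpace ℝ (Fin n) =>
          ∫⁻ y in ball x (q : ℝ), g m y := by
        have : ∀ x : EuclideanSpace ℝ (Fin n), (∫⁻ y in ball x (q : ℝ), g m y) =
            ∫⁻ y, (ball x (q : ℝ)).indicator (g m) y := fun x =>
          (lintegral_indicator measurableSet_ball (g m)).symm
        simp only [this]
        apply Measurable.lintegral_prod_right'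
          (f := fun p : EuclideanSpace ℝ (Fin n) × EuclideanSpace ℝ (Fin n) =>
            (ball p.1 (q : ℝ)).indicator (g m) p.2)
        apply Measurable.indicator ((hgm m).comp measurable_snd)
        have : {p : EuclideanSpace ℝ (Fin n) × EuclideanSpace ℝ (Fin n) |
            p.2 ∈ ball p.1 (q : ℝ)} = {p | dist p.2 p.1 < (q : ℝ)} := rfl
        exact measurableSet_lt (measurable_snd.dist measurable_fst) measurable_const
      have hconst : Measurable fun x : EuclideanSpace ℝ (Fin n) =>
          (k : ℝ≥0∞) * volume (ball x (q : ℝ)) := by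
        have : ∀ x : EuclideanSpace ℝ (Fin n), volume (ball x (q : ℝ)) =
            volume (ball (0 : EuclideanSpace ℝ (Fin n)) (q : ℝ)) := fun x =>
          Measure.addHaar_ball_center volume x _
        simp only [this]
        exact measurable_const
      exact measurableSet_le hmeas hconst
    have hmax : ∀ m k, ∀ x ∈ S m k, maximalFn (g m) x ≤ (k : ℝ≥0∞) :=
      fun m k x hx => maximalFn_le_of_rat hn _ x _ fun q hq => hx.2 q hq
    -- truncation equality along segments
    have hseg : ∀ (m : ℕ), ∀ a b : EuclideanSpace ℝ (Fin n), ‖a‖ + dist a b < (m : ℝ) →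
        (∫⁻ t in Icc (0:ℝ) 1, ν (a + t • (b - a))) =
          ∫⁻ t in Icc (0:ℝ) 1, g m (a + t • (b - a)) := by
      intro m a b hab
      apply setLIntegral_congr_fun measurableSet_Icc
      intro t ht
      have hmem : a + t • (b - a) ∈ ball (0 : EuclideanSpace ℝ (Fin n)) (m : ℝ) := by
        rw [mem_ball, dist_zero_right]
        calc ‖a + t • (b - a)‖ ≤ ‖a‖ + ‖t • (b - a)‖ := norm_add_le _ _
          _ = ‖a‖ + |t| * ‖b - a‖ := by rw [norm_smul, Real.norm_eq_abs]
          _ ≤ ‖a‖ + 1 * ‖b - a‖ := by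
              have := abs_le.mpr ⟨by linarith [ht.1], ht.2⟩
              have hn0 : (0:ℝ) ≤ ‖b - a‖ := norm_nonneg _
              nlinarith
          _ = ‖a‖ + dist a b := by rw [one_mul, dist_eq_norm, norm_sub_rev]
          _ < m := hab
      rw [hg]
      simp only
      rw [indicator_of_mem hmem]
    have hcont : ∀ m k, ContinuousOn u (S m k) := by
      intro m k
      apply continuousOn_of_lip (L := ((2:ℝ) ^ (n + 1) + 1) * k) (by positivity)
      intro x hx y hy
      have hm8 : (0:ℝ) < (m : ℝ) / 8 := lt_of_le_of_lt dist_nonneg (mem_ball.mp hx.1)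
      have hxn : ‖x‖ < (m : ℝ) / 8 := by
        have := mem_ball.mp hx.1; rwa [dist_zero_right] at this
      have hyn : ‖y‖ < (m : ℝ) / 8 := by
        have := mem_ball.mp hy.1; rwa [dist_zero_right] at this
      have hdxy : dist x y < (m : ℝ) / 4 := by
        calc dist x y ≤ ‖x‖ + ‖y‖ := by
              rw [dist_eq_norm]; exact norm_sub_le _ _
          _ < (m : ℝ) / 4 := by linarith
      have hux : ∀ b ∈ ball x (dist x y), ENNReal.ofReal |u b - u x| ≤
          ENNReal.ofReal (dist x b) * ∫⁻ t in Icc (0 : ℝ) 1, g m (x + t • (b - x)) := by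
        intro b hb
        rw [← hseg m x b (by
          have hbx : dist x b < dist x y := by rw [dist_comm]; exact mem_ball.mp hb
          linarith)]
        exact hu x b
      have huy : ∀ b ∈ ball x (dist x y), ENNReal.ofReal |u b - u y| ≤
          ENNReal.ofReal (dist y b) * ∫⁻ t in Icc (0 : ℝ) 1, g m (y + t • (b - y)) := by
        intro b hb
        rw [← hseg m y b (by
          have hbx : dist x b < dist x y := by rw [dist_comm]; exact mem_ball.mp hb
          have : dist y b ≤ dist y x + dist x b := dist_triangle _ _ _
          have hyx : dist y x = dist x y := dist_comm _ _
          linarith)]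
        exact hu y b
      have hB := keyB hn (g m) (hgm m) u x y (k : ℝ≥0∞)
        (hmax m k x hx) (hmax m k y hy) hux huy
      rw [Real.dist_eq]
      exact toReal_est dist_nonneg hB
    have hcover : ∀ᵐ x : EuclideanSpace ℝ (Fin n) ∂volume, ∃ p : ℕ × ℕ, x ∈ S p.1 p.2 := by
      have hfin : ∀ᵐ x : EuclideanSpace ℝ (Fin n) ∂volume,
          ∀ m : ℕ, maximalFn (g m) x < ∞ :=
        ae_all_iff.mpr fun m => ae_max_lt_top hn _ (hgm m) (hgint m)
      filter_upwards [hfin] with x hx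
      obtain ⟨m, hm⟩ := exists_nat_gt (‖x‖ * 8)
      obtain ⟨k, hk⟩ := ENNReal.exists_nat_gt (hx m).ne
      refine ⟨(m, k), ?_, ?_⟩
      · rw [mem_ball, dist_zero_right]; linarith
      · intro q hq
        calc ∫⁻ y in ball x (q : ℝ), g m y ≤
            maximalFn (g m) x * volume (ball x (q : ℝ)) :=
              aux_le_max _ x (by exact_mod_cast hq)
          _ ≤ (k : ℝ≥0∞) * volume (ball x (q : ℝ)) := mul_le_mul_left hk.le _
    have h1 : ∀ p : ℕ × ℕ, AEMeasurable u (volume.restrict (S p.1 p.2)) := fun p =>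
      (hcont p.1 p.2).aemeasurable (hSmeas p.1 p.2)
    have h2 : AEMeasurable u (volume.restrict (⋃ p : ℕ × ℕ, S p.1 p.2)) :=
      aemeasurable_iUnion_iff.mpr h1
    rwa [Measure.restrict_eq_self_of_ae_mem (by
      filter_upwards [hcover] with x hx
      exact mem_iUnion.mpr ⟨hx.choose, hx.choose_spec⟩)] at h2
end

section
/- Let 1 ≤ q < ∞, let μ be a nonzero finite Borel measure on ℝⁿ, and let B ⊆ ℝⁿ be a Borel set with 0 < λⁿ(B) < ∞. Then there exists c > 0 such that every Borel function f : ℝⁿ → [0,∞] satisfying ∫_{ℝⁿ} f(x + y) dμ(y) ≥ 1 for every x ∈ B must satisfy ∫_{ℝⁿ} f^q dλⁿ ≥ c. -/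
open MeasureTheory Metric Set ENNReal

/-- Let `1 ≤ q < ∞`, let `μ` be a nonzero finite Borel measure on `ℝⁿ`
and let `B ⊆ ℝⁿ` be Borel with `0 < λⁿ(B) < ∞`. Then there is `c > 0` such that every
Borel `f : ℝⁿ → [0,∞]` with `∫ f(x + y) dμ(y) ≥ 1` for every `x ∈ B` satisfies
`∫ f^q dλⁿ ≥ c`. (Translates of a nonzero measure over a set of positive Lebesgue measure
have positive `q`-modulus.) -/
theorem translates_positive_modulus
    (n : ℕ) (q : ℝ) (hq : 1 ≤ q)
    (μ : Measure (EuclideanSpace ℝ (Fin n))) [IsFiniteMeasure μ] (hμ : μ ≠ 0)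
    (B : Set (EuclideanSpace ℝ (Fin n))) (hB : MeasurableSet B)
    (hBpos : 0 < volume B) (hBfin : volume B < ∞) :
    ∃ c : ℝ, 0 < c ∧
      ∀ f : EuclideanSpace ℝ (Fin n) → ℝ≥0∞, Measurable f →
        (∀ x ∈ B, 1 ≤ ∫⁻ y, f (x + y) ∂μ) →
        ENNReal.ofReal c ≤ ∫⁻ x, f x ^ q := by
  set M := μ Set.univ with hMdef
  have hM0 : M ≠ 0 := by
    simpa [hMdef, Measure.measure_univ_eq_zero] using hμ
  have hMtop : M ≠ ∞ := measure_ne_top μ _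
  set e : ℝ≥0∞ := volume B * M ^ (-q) with he
  have hrpos : 0 < M ^ (-q) := ENNReal.rpow_pos (lt_of_le_of_ne zero_le (Ne.symm hM0)) hMtop
  have hrtop : M ^ (-q) ≠ ∞ := by
    simp [ENNReal.rpow_eq_top_iff, hM0, hMtop]
  have he0 : e ≠ 0 := by
    simp [he, hBpos.ne', hrpos.ne']
  have hetop : e ≠ ∞ := ENNReal.mul_ne_top hBfin.ne hrtop
  refine ⟨e.toReal, ENNReal.toReal_pos he0 hetop, ?_⟩
  intro f hf hint
  rw [ENNReal.ofReal_toReal hetop]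
  -- pointwise Hölder: for each x ∈ B, M ^ (1 - q) ≤ ∫ f(x+y)^q dμ(y)
  have key : ∀ x ∈ B, M ^ (1 - q) ≤ ∫⁻ y, f (x + y) ^ q ∂μ := by
    intro x hx
    rcases eq_or_lt_of_le hq with hq1 | hq1
    · simpa [← hq1] using hint x hx
    · have hpq : (q.conjExponent).HolderConjugate q :=
        (Real.HolderConjugate.conjExponent hq1).symm
      set p := q.conjExponent with hp
      have hg : AEMeasurable (fun y => f (x + y)) μ :=
        (hf.comp (measurable_const_add x)).aemeasurable
      have hold := ENNReal.lintegral_mul_le_Lp_mul_Lq μ hpq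
        (f := fun _ => (1 : ℝ≥0∞)) (g := fun y => f (x + y)) aemeasurable_const hg
      simp only [Pi.mul_apply, one_mul, ENNReal.one_rpow, lintegral_const, ← hMdef] at hold
      have h1 : (1 : ℝ≥0∞) ≤ M ^ (1 / p) * (∫⁻ y, f (x + y) ^ q ∂μ) ^ (1 / q) :=
        le_trans (hint x hx) hold
      set I := ∫⁻ y, f (x + y) ^ q ∂μ with hI
      have hq0 : (0:ℝ) < q := lt_of_lt_of_le one_pos hq
      have h2 : M ^ (-(1 / p)) ≤ I ^ (1 / q) := by
        have h2' := mul_le_mul_right h1 (M ^ (-(1 / p)))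
        rwa [mul_one, ← mul_assoc, ← ENNReal.rpow_add _ _ hM0 hMtop, neg_add_cancel,
          ENNReal.rpow_zero, one_mul] at h2'
      have h3 := ENNReal.rpow_le_rpow h2 hq0.le
      rw [← ENNReal.rpow_mul, ← ENNReal.rpow_mul] at h3
      have e1 : 1 / q * q = 1 := by field_simp
      have e2 : -(1 / p) * q = 1 - q := by
        have hq1' : q - 1 ≠ 0 := sub_ne_zero.mpr (ne_of_gt hq1)
        rw [hp, Real.conjExponent]
        field_simp
        ring
      rwa [e1, e2, ENNReal.rpow_one] at h3
  -- measurability of the two-variable function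
  have hprod : AEMeasurable (fun z : EuclideanSpace ℝ (Fin n) × EuclideanSpace ℝ (Fin n) =>
      f (z.1 + z.2) ^ q) ((volume.restrict B).prod μ) :=
    ((hf.comp measurable_add).pow_const _).aemeasurable
  have h4 : volume B * M ^ (1 - q) ≤ ∫⁻ x in B, ∫⁻ y, f (x + y) ^ q ∂μ ∂volume := by
    have := setLIntegral_mono_ae (μ := volume) (s := B)
      (f := fun _ => M ^ (1 - q)) (g := fun x => ∫⁻ y, f (x + y) ^ q ∂μ) ?_ ?_
    · simpa [mul_comm] using this
    · exact (Measurable.lintegral_prod_right' (ν := μ)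
        ((hf.comp measurable_add).pow_const q)).aemeasurable
    · exact Filter.Eventually.of_forall key
  have h5 : ∫⁻ x in B, ∫⁻ y, f (x + y) ^ q ∂μ ∂volume
      = ∫⁻ y, ∫⁻ x in B, f (x + y) ^ q ∂volume ∂μ :=
    lintegral_lintegral_swap hprod
  have h6 : ∀ y, ∫⁻ x in B, f (x + y) ^ q ∂volume ≤ ∫⁻ x, f x ^ q := by
    intro y
    refine le_trans (setLIntegral_le_lintegral _ _) ?_
    exact le_of_eq (lintegral_add_right_eq_self (fun x => f x ^ q) y)
  have h7 : volume B * M ^ (1 - q) ≤ M * ∫⁻ x, f x ^ q := by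
    calc volume B * M ^ (1 - q) ≤ ∫⁻ y, ∫⁻ x in B, f (x + y) ^ q ∂volume ∂μ := h5 ▸ h4
      _ ≤ ∫⁻ _, (∫⁻ x, f x ^ q) ∂μ := lintegral_mono fun y => h6 y
      _ = M * ∫⁻ x, f x ^ q := by simp [hMdef, mul_comm]
  -- divide by M
  have hsplit : M ^ (1 - q) = M * M ^ (-q) := by
    rw [show (1 : ℝ) - q = 1 + -q by ring, ENNReal.rpow_add 1 (-q) hM0 hMtop,
      ENNReal.rpow_one]
  rw [hsplit, ← mul_assoc, mul_comm (volume B) M, mul_assoc] at h7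
  exact (ENNReal.mul_le_mul_iff_right hM0 hMtop).mp h7
end

section
/- Let P ⊆ ℝⁿ be a compact convex set whose affine hull has dimension m ≥ 1. Then there exists D ≥ 1 such that for every y ∈ P and every r > 0, H^m(P ∩ B(y, 2r)) ≤ D · H^m(P ∩ B(y, r)), where H^m denotes m-dimensional Hausdorff measure on ℝⁿ and B(y, r) the open Euclidean ball. -/
open MeasureTheory Metric Set ENNReal

/-- Let `P ⊆ ℝⁿ` be a compact convex set whose affine hull has dimension
`m ≥ 1`. Then there is `D ≥ 1` such that for every `y ∈ P` and `r > 0`,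
`H^m(P ∩ B(y,2r)) ≤ D · H^m(P ∩ B(y,r))`. -/
theorem convex_set_hausdorff_measure_doubling
    (n m : ℕ) (hm : 1 ≤ m) (P : Set (EuclideanSpace ℝ (Fin n)))
    (hPc : IsCompact P) (hPconv : Convex ℝ P)
    (hdim : Module.finrank ℝ (affineSpan ℝ P).direction = m) :
    ∃ D : ℝ, 1 ≤ D ∧ ∀ y ∈ P, ∀ r : ℝ, 0 < r →
      μH[(m : ℝ)] (P ∩ Metric.ball y (2 * r)) ≤
        ENNReal.ofReal D * μH[(m : ℝ)] (P ∩ Metric.ball y r) := by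
  refine ⟨2 ^ m, one_le_pow₀ (by norm_num), ?_⟩
  intro y hy r hr
  set S := P ∩ Metric.ball y (2 * r) with hS
  have hsub : AffineMap.homothety y (1/2 : ℝ) '' S ⊆ P ∩ Metric.ball y r := by
    rintro _ ⟨x, ⟨hxP, hxB⟩, rfl⟩
    refine ⟨?_, ?_⟩
    · have h := hPconv hxP hy (by norm_num : (0:ℝ) ≤ 1/2) (by norm_num : (0:ℝ) ≤ 1/2)
        (by norm_num)
      have : AffineMap.homothety y (1/2 : ℝ) x = (1/2 : ℝ) • x + (1/2 : ℝ) • y := by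
        simp [AffineMap.homothety_apply]
        module
      rw [this]; exact h
    · have hd : dist (AffineMap.homothety y (1/2 : ℝ) x) y = (1/2) * dist x y := by
        simp [AffineMap.homothety_apply, dist_eq_norm]
        rw [norm_smul]
        norm_num
      rw [Metric.mem_ball, hd]
      have := Metric.mem_ball.mp hxB
      linarith
  have him : μH[(m:ℝ)] (AffineMap.homothety y (1/2 : ℝ) '' S)
      = ‖(1/2 : ℝ)‖₊ ^ (m:ℝ) • μH[(m:ℝ)] S :=
    hausdorffMeasure_homothety_image (by positivity) y (by norm_num) S
  have hnn : ‖(1/2 : ℝ)‖₊ = 2⁻¹ := by ext; simp [abs_of_pos]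
  rw [hnn] at him
  have hmono := measure_mono (μ := μH[(m:ℝ)]) hsub
  rw [him, ENNReal.smul_def, smul_eq_mul, ENNReal.coe_rpow_of_ne_zero (by norm_num),
    ENNReal.coe_inv (by norm_num), ENNReal.coe_ofNat] at hmono
  have h2 : (ENNReal.ofReal (2 ^ m)) = (2 : ℝ≥0∞) ^ (m:ℝ) := by
    rw [ENNReal.rpow_natCast, ENNReal.ofReal_pow (by norm_num)]
    norm_num
  rw [h2]
  calc μH[(m:ℝ)] S = (2 : ℝ≥0∞) ^ (m:ℝ) * ((2 : ℝ≥0∞)⁻¹ ^ (m:ℝ) * μH[(m:ℝ)] S) := by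
        rw [← mul_assoc, ← ENNReal.mul_rpow_of_ne_top (by norm_num) (by norm_num),
          ENNReal.mul_inv_cancel (by norm_num) (by norm_num), ENNReal.one_rpow, one_mul]
    _ ≤ (2 : ℝ≥0∞) ^ (m:ℝ) * μH[(m:ℝ)] (P ∩ Metric.ball y r) := by
        gcongr
end
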